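/- Let f : ℝⁿ → ℝ be continuously differentiable with L-Lipschitz gradient, and let e be a unit vector, y, x ∈ ℝⁿ, ᾱ > 0, C > 0. If f(y + ᾱe) > f(y) − C·ᾱ² and f(y − ᾱe) > f(y) − C·ᾱ², then |∇f(x)ᵀe| < (C + L)·ᾱ + L·‖x − y‖. -/

import Mathlib

open RealInnerProductSpace

theorem taylorb {n : ℕ} (f : EuclideanSpace ℝ (Fin n) → ℝ) (L : ℝ)
    (hf : ContDiff ℝ 1 f) (hL : 0 ≤ L)
    (hlip : ∀ x y, ‖gradient f x - gradient f y‖ ≤ L * ‖x - y‖)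
    (y v : EuclideanSpace ℝ (Fin n)) :
    f (y + v) - f y ≤ ⟪gradient f y, v⟫ + L * ‖v‖ ^ 2 := by
  have hdiff := hf.differentiable one_ne_zero
  set g : ℝ → ℝ := fun t => f (y + t • v) with hg
  have hder : ∀ t : ℝ, HasDerivAt g (⟪gradient f (y + t • v), v⟫) t := by
    intro t
    have hc : HasDerivAt (fun t : ℝ => y + t • v) v t := by
      simpa using ((hasDerivAt_id t).smul_const v).const_add y
    have hfd := ((hdiff (y + t • v)).hasGradientAt.hasFDerivAt).comp_hasDerivAt t hc
    rw [InnerProductSpace.toDual_apply_apply] at hfd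
    exact hfd
  obtain ⟨t, ht, hteq⟩ := exists_hasDerivAt_eq_slope g
      (fun t => ⟪gradient f (y + t • v), v⟫) (by norm_num : (0:ℝ) < 1)
      (fun t _ => (hder t).continuousAt.continuousWithinAt) (fun t _ => hder t)
  have hg1 : g 1 = f (y + v) := by simp [hg]
  have hg0 : g 0 = f y := by simp [hg]
  rw [hg1, hg0] at hteq
  have key : f (y + v) - f y = ⟪gradient f (y + t • v), v⟫ := by
    rw [show (1:ℝ)-0 = 1 by norm_num, div_one] at hteq; linarith
  have hsplit : ⟪gradient f (y + t • v), v⟫ =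
      ⟪gradient f y, v⟫ + ⟪gradient f (y + t • v) - gradient f y, v⟫ := by
    rw [inner_sub_left]; ring
  have hb : ⟪gradient f (y + t • v) - gradient f y, v⟫ ≤ L * ‖v‖ ^ 2 := by
    calc ⟪gradient f (y + t • v) - gradient f y, v⟫
        ≤ ‖gradient f (y + t • v) - gradient f y‖ * ‖v‖ := real_inner_le_norm _ _
      _ ≤ (L * ‖(y + t • v) - y‖) * ‖v‖ := by
          have := hlip (y + t • v) y
          nlinarith [norm_nonneg v]
      _ ≤ L * ‖v‖ ^ 2 := by
          have : ‖(y + t • v) - y‖ = |t| * ‖v‖ := by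
            simp [norm_smul]
          rw [this]
          have ht1 : |t| ≤ 1 := by
            rw [abs_le]; constructor <;> [linarith [ht.1]; linarith [ht.2]]
          nlinarith [norm_nonneg v, abs_nonneg t, mul_nonneg (mul_nonneg hL (norm_nonneg v)) (norm_nonneg v)]
  linarith [key, hsplit ▸ key]

theorem stmt_13 {n : ℕ} (f : EuclideanSpace ℝ (Fin n) → ℝ) (L : ℝ)
    (hf : ContDiff ℝ 1 f)
    (hlip : ∀ x y, ‖gradient f x - gradient f y‖ ≤ L * ‖x - y‖)
    (y x e : EuclideanSpace ℝ (Fin n)) (he : ‖e‖ = 1)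
    (α C : ℝ) (hα : 0 < α) (hC : 0 < C)
    (hfailp : f (y + α • e) > f y - C * α ^ 2)
    (hfailm : f (y - α • e) > f y - C * α ^ 2) :
    |⟪gradient f x, e⟫| < (C + L) * α + L * ‖x - y‖ := by
  have hL : 0 ≤ L := by
    have h := hlip (y + e) y
    have h2 : ‖y + e - y‖ = 1 := by simp [he]
    rw [h2, mul_one] at h
    exact le_trans (norm_nonneg _) h
  have h1 := taylorb f L hf hL hlip y (α • e)
  have h2 := taylorb f L hf hL hlip y (-(α • e))
  rw [← sub_eq_add_neg] at h2
  have hn : ‖α • e‖ ^ 2 = α ^ 2 := by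
    rw [norm_smul, he, mul_one, Real.norm_eq_abs, sq_abs]
  have hnn : ‖-(α • e)‖ ^ 2 = α ^ 2 := by rw [norm_neg]; exact hn
  rw [hn, real_inner_smul_right] at h1
  rw [hnn, inner_neg_right, real_inner_smul_right] at h2
  have hy : |⟪gradient f y, e⟫| < (C + L) * α := by
    rw [abs_lt]
    constructor
    · nlinarith
    · nlinarith
  have hx : |⟪gradient f x, e⟫| ≤ |⟪gradient f y, e⟫| + L * ‖x - y‖ := by
    have hs : ⟪gradient f x, e⟫ = ⟪gradient f y, e⟫ + ⟪gradient f x - gradient f y, e⟫ := by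
      rw [inner_sub_left]; ring
    have hb : |⟪gradient f x - gradient f y, e⟫| ≤ L * ‖x - y‖ := by
      calc |⟪gradient f x - gradient f y, e⟫| ≤ ‖gradient f x - gradient f y‖ * ‖e‖ :=
            abs_real_inner_le_norm _ _
        _ = ‖gradient f x - gradient f y‖ := by rw [he, mul_one]
        _ ≤ L * ‖x - y‖ := hlip x y
    calc |⟪gradient f x, e⟫| ≤ |⟪gradient f y, e⟫| + |⟪gradient f x - gradient f y, e⟫| := by
          rw [hs]; exact abs_add_le _ _
      _ ≤ |⟪gradient f y, e⟫| + L * ‖x - y‖ := by linarith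
  linarith
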